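/- Let (E, F) be an interpolation pair of dyadic wavelet sets and let G ⊆ E ∪ F be a dyadic wavelet set. Then σ_E^G = id almost everywhere on E ∩ G and σ_E^G = σ_E^F almost everywhere on E ∖ G, and both (E, G) and (F, G) are interpolation pairs, i.e. (σ_E^G)² = id_ℝ and (σ_F^G)² = id_ℝ almost everywhere. -/
import Mathlib


open MeasureTheory Set
open scoped Real symmDiff

noncomputable section

/-- An a.e. (modulo Lebesgue-null sets) partition of the set `A` by the family `P`. -/
def IsAEPartition {ι : Type*} (P : ι → Set ℝ) (A : Set ℝ) : Prop :=
  volume (A ∆ (⋃ i, P i)) = 0 ∧ ∀ i j : ι, i ≠ j → volume (P i ∩ P j) = 0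

/-- `E ⊆ ℝ` is a dyadic wavelet set: its `2πℤ`-translates and its `2ℤ`-dilates each
partition `ℝ` modulo Lebesgue-null sets. -/
def IsDyadicWaveletSet (E : Set ℝ) : Prop :=
  MeasurableSet E ∧
  (∀ᵐ x : ℝ ∂volume, ∃! n : ℤ, x + 2 * Real.pi * n ∈ E) ∧
  (∀ᵐ x : ℝ ∂volume, ∃! k : ℤ, (2 : ℝ) ^ k * x ∈ E)

/-- `σ` is (a representative of) the interpolation map `σ_E^F` for wavelet sets `E, F`. -/
def IsInterpolationMap (E F : Set ℝ) (σ : ℝ → ℝ) : Prop :=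
  Measurable σ ∧ σ 0 = 0 ∧
  (∀ᵐ s : ℝ ∂volume, s ∈ E → σ s ∈ F ∧ ∃ n : ℤ, σ s - s = 2 * Real.pi * n) ∧
  (∀ n : ℤ, ∀ᵐ s : ℝ ∂volume, (2 : ℝ) ^ (-n) * s ∈ E →
    σ s = (2 : ℝ) ^ n * σ ((2 : ℝ) ^ (-n) * s))

/-- The `2π`-congruence domain of a map `σ`. -/
def CongruenceDomain (σ : ℝ → ℝ) : Set ℝ :=
  {s : ℝ | ∃ n : ℤ, σ s - s = 2 * Real.pi * n}

/-- `A` is `2π`-translation congruent to `B`. -/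
def TransCongruent (A B : Set ℝ) : Prop :=
  ∃ P : ℤ → Set ℝ, (∀ n, MeasurableSet (P n)) ∧ IsAEPartition P A ∧
    IsAEPartition (fun (n : ℤ) => (fun x => x + 2 * Real.pi * (n : ℝ)) '' P n) B

/-- `A` is `2`-dilation congruent to `B`. -/
def DilCongruent (A B : Set ℝ) : Prop :=
  ∃ P : ℤ → Set ℝ, (∀ n, MeasurableSet (P n)) ∧ IsAEPartition P A ∧
    IsAEPartition (fun (n : ℤ) => (fun x => (2 : ℝ) ^ n * x) '' P n) B

/-! ### Auxiliary lemmas -/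

private lemma zmerge (a b : ℤ) (x : ℝ) :
    (2 : ℝ) ^ a * ((2 : ℝ) ^ b * x) = (2 : ℝ) ^ (a + b) * x := by
  rw [← mul_assoc, ← zpow_add₀ (two_ne_zero) a b]

private lemma zcan (n : ℤ) (x : ℝ) : (2 : ℝ) ^ (-n) * ((2 : ℝ) ^ n * x) = x := by
  rw [zmerge, neg_add_cancel, zpow_zero, one_mul]

/-- Two points of `S` that are `2π`-congruent to a common point `x` coincide,
given the a.e. uniqueness of the translate of `x` lying in `S`. -/
private lemma trans_eq {S : Set ℝ} {x a b : ℝ}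
    (hu : ∃! n : ℤ, x + 2 * Real.pi * n ∈ S)
    (ha : a ∈ S) (hb : b ∈ S)
    (hca : ∃ n : ℤ, a - x = 2 * Real.pi * n)
    (hcb : ∃ n : ℤ, b - x = 2 * Real.pi * n) : a = b := by
  obtain ⟨na, hna⟩ := hca
  obtain ⟨nb, hnb⟩ := hcb
  obtain ⟨m, _, hm⟩ := hu
  have ha' : x + 2 * Real.pi * na ∈ S := by
    have : x + 2 * Real.pi * na = a := by linarith
    rw [this]; exact ha
  have hb' : x + 2 * Real.pi * nb ∈ S := by
    have : x + 2 * Real.pi * nb = b := by linarith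
    rw [this]; exact hb
  have : na = nb := (hm na ha').trans (hm nb hb').symm
  have hcast : (na : ℝ) = nb := by exact_mod_cast this
  rw [hcast] at hna
  linarith

private lemma dil_eq {S : Set ℝ} {x : ℝ} (hu : ∃! k : ℤ, (2 : ℝ) ^ k * x ∈ S)
    {a b : ℤ} (h1 : (2 : ℝ) ^ a * x ∈ S) (h2 : (2 : ℝ) ^ b * x ∈ S) : a = b := by
  obtain ⟨m, _, hm⟩ := hu
  exact (hm a h1).trans (hm b h2).symm

private lemma self_cong (x : ℝ) : ∃ n : ℤ, x - x = 2 * Real.pi * n :=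
  ⟨0, by simp⟩

/-- The pointwise properties needed at a "good" point. -/
structure GoodPt (E F G : Set ℝ) (σEF σEG σFG : ℝ → ℝ) (x : ℝ) : Prop where
  tEF : x ∈ E → σEF x ∈ F ∧ ∃ n : ℤ, σEF x - x = 2 * Real.pi * n
  tEG : x ∈ E → σEG x ∈ G ∧ ∃ n : ℤ, σEG x - x = 2 * Real.pi * n
  tFG : x ∈ F → σFG x ∈ G ∧ ∃ n : ℤ, σFG x - x = 2 * Real.pi * n
  dEF : ∀ n : ℤ, (2 : ℝ) ^ (-n) * x ∈ E → σEF x = (2 : ℝ) ^ n * σEF ((2 : ℝ) ^ (-n) * x)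
  dEG : ∀ n : ℤ, (2 : ℝ) ^ (-n) * x ∈ E → σEG x = (2 : ℝ) ^ n * σEG ((2 : ℝ) ^ (-n) * x)
  dFG : ∀ n : ℤ, (2 : ℝ) ^ (-n) * x ∈ F → σFG x = (2 : ℝ) ^ n * σFG ((2 : ℝ) ^ (-n) * x)
  pair : σEF (σEF x) = x
  uE : ∃! n : ℤ, x + 2 * Real.pi * n ∈ E
  uF : ∃! n : ℤ, x + 2 * Real.pi * n ∈ F
  uG : ∃! n : ℤ, x + 2 * Real.pi * n ∈ G
  kE : ∃! k : ℤ, (2 : ℝ) ^ k * x ∈ E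
  kF : ∃! k : ℤ, (2 : ℝ) ^ k * x ∈ F
  kG : ∃! k : ℤ, (2 : ℝ) ^ k * x ∈ G

section Pointwise

variable {E F G : Set ℝ} {σEF σEG σFG : ℝ → ℝ}

private lemma claim1E {x : ℝ} (h : GoodPt E F G σEF σEG σFG x)
    (hmem : x ∈ E) (hg : x ∈ G) : σEG x = x :=
  trans_eq h.uG (h.tEG hmem).1 hg (h.tEG hmem).2 (self_cong x)

private lemma claim1F {x : ℝ} (h : GoodPt E F G σEF σEG σFG x)
    (hmem : x ∈ F) (hg : x ∈ G) : σFG x = x :=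
  trans_eq h.uG (h.tFG hmem).1 hg (h.tFG hmem).2 (self_cong x)

private lemma claim2E (hGsub : G ⊆ E ∪ F) {x : ℝ} (h : GoodPt E F G σEF σEG σFG x)
    (hmem : x ∈ E) (hg : x ∉ G) : σEG x ∈ F ∧ σEG x = σEF x := by
  have h1 := h.tEG hmem
  rcases hGsub h1.1 with hin | hin
  · exfalso
    apply hg
    have hx : σEG x = x := trans_eq h.uE hin hmem h1.2 (self_cong x)
    rw [← hx]; exact h1.1
  · exact ⟨hin, trans_eq h.uF hin (h.tEF hmem).1 h1.2 (h.tEF hmem).2⟩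

/-- `σEF` maps `F` into `E` `2π`-congruently (a.e., pointwise form). -/
private lemma star {x : ℝ} (hx : GoodPt E F G σEF σEG σFG x)
    (hys : ∀ m : ℤ, GoodPt E F G σEF σEG σFG ((2 : ℝ) ^ m * σEF x))
    (hmem : x ∈ F) : σEF x ∈ E ∧ ∃ n : ℤ, σEF x - x = 2 * Real.pi * n := by
  have hy : GoodPt E F G σEF σEG σFG (σEF x) := by
    have := hys 0; simpa using this
  obtain ⟨k', hk'⟩ := hy.kE.exists
  have hd := hy.dEF (-k')
  rw [neg_neg] at hd
  have hEq := hd hk'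
  obtain ⟨n', hn'⟩ := ((hys k').tEF hk').2
  -- σEF (σEF x) = x
  have hp : σEF (σEF x) = x := hx.pair
  rw [hp] at hEq
  -- x = 2^(-k') * (2^k' * σEF x + 2πn')
  have hx2 : (2 : ℝ) ^ k' * x ∈ F := by
    have heq2 : (2 : ℝ) ^ k' * x = σEF ((2 : ℝ) ^ k' * σEF x) := by
      conv_lhs => rw [hEq]
      rw [zmerge, add_neg_cancel, zpow_zero, one_mul]
    rw [heq2]
    exact ((hys k').tEF hk').1
  have hk0 : k' = (0 : ℤ) := dil_eq hx.kF hx2 (by simpa using hmem)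
  rw [hk0] at hk' hn'
  simp only [zpow_zero, one_mul] at hk' hn'
  have hEq0 : σEF (σEF x) - σEF x = 2 * Real.pi * n' := hn'
  rw [hp] at hEq0
  refine ⟨hk', ⟨-n', ?_⟩⟩
  push_cast
  linarith

private lemma claim2F (hGsub : G ⊆ E ∪ F) {x : ℝ} (hx : GoodPt E F G σEF σEG σFG x)
    (hys : ∀ m : ℤ, GoodPt E F G σEF σEG σFG ((2 : ℝ) ^ m * σEF x))
    (hmem : x ∈ F) (hg : x ∉ G) : σFG x ∈ E ∧ σFG x = σEF x := by
  have h1 := hx.tFG hmem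
  rcases hGsub h1.1 with hin | hin
  · have hst := star hx hys hmem
    exact ⟨hin, trans_eq hx.uE hin hst.1 h1.2 hst.2⟩
  · exfalso
    apply hg
    have hxx : σFG x = x := trans_eq hx.uF hin hmem h1.2 (self_cong x)
    rw [← hxx]; exact h1.1

private lemma claim3pt (hGsub : G ⊆ E ∪ F) {s : ℝ}
    (hA : ∀ m : ℤ, GoodPt E F G σEF σEG σFG ((2 : ℝ) ^ m * s))
    (hB : ∀ k m : ℤ, GoodPt E F G σEF σEG σFG ((2 : ℝ) ^ m * σEF ((2 : ℝ) ^ k * s))) :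
    σEG (σEG s) = s := by
  have hs : GoodPt E F G σEF σEG σFG s := by have := hA 0; simpa using this
  obtain ⟨k, hk⟩ := hs.kE.exists
  have hGt : GoodPt E F G σEF σEG σFG ((2 : ℝ) ^ k * s) := hA k
  have hσs : σEG s = (2 : ℝ) ^ (-k) * σEG ((2 : ℝ) ^ k * s) := by
    have := hs.dEG (-k); rw [neg_neg] at this; exact this hk
  by_cases htG : (2 : ℝ) ^ k * s ∈ G
  · have hid : σEG ((2 : ℝ) ^ k * s) = (2 : ℝ) ^ k * s := claim1E hGt hk htG
    have hfix : σEG s = s := by rw [hσs, hid, zcan]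
    rw [hfix, hfix]
  · have h2 := claim2E hGsub hGt hk htG
    have huG : σEF ((2 : ℝ) ^ k * s) ∈ G := by
      have := (hGt.tEG hk).1; rwa [h2.2] at this
    have hut : ∃ n : ℤ, σEF ((2 : ℝ) ^ k * s) - (2 : ℝ) ^ k * s = 2 * Real.pi * n :=
      (hGt.tEF hk).2
    have huE : σEF ((2 : ℝ) ^ k * s) ∉ E := by
      intro hmem
      apply htG
      have heq : σEF ((2 : ℝ) ^ k * s) = (2 : ℝ) ^ k * s :=
        trans_eq hGt.uE hmem hk hut (self_cong _)
      rw [← heq]; exact huG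
    have hGu : GoodPt E F G σEF σEG σFG (σEF ((2 : ℝ) ^ k * s)) := by
      have := hB k 0; simpa using this
    obtain ⟨j, hj⟩ := hGu.kE.exists
    have hj0 : j ≠ 0 := by
      intro h0; rw [h0] at hj; simp only [zpow_zero, one_mul] at hj; exact huE hj
    have hGv : GoodPt E F G σEF σEG σFG ((2 : ℝ) ^ j * σEF ((2 : ℝ) ^ k * s)) := hB k j
    have hw := hGv.tEG hj
    -- σEG v ∈ F
    have hwF : σEG ((2 : ℝ) ^ j * σEF ((2 : ℝ) ^ k * s)) ∈ F := by
      rcases hGsub hw.1 with hin | hin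
      · exfalso
        have hwv : σEG ((2 : ℝ) ^ j * σEF ((2 : ℝ) ^ k * s))
            = (2 : ℝ) ^ j * σEF ((2 : ℝ) ^ k * s) :=
          trans_eq hGv.uE hin hj hw.2 (self_cong _)
        have hvG : (2 : ℝ) ^ j * σEF ((2 : ℝ) ^ k * s) ∈ G := by rw [← hwv]; exact hw.1
        have huG' : (2 : ℝ) ^ (-j) * ((2 : ℝ) ^ j * σEF ((2 : ℝ) ^ k * s)) ∈ G := by
          rw [zcan]; exact huG
        have h0j : (0 : ℤ) = -j :=
          dil_eq hGv.kG (by simpa using hvG) huG'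
        omega
      · exact hin
    -- Good point at 2^j * (2^k * s)
    have hGjt : GoodPt E F G σEF σEG σFG ((2 : ℝ) ^ j * ((2 : ℝ) ^ k * s)) := by
      have := hA (j + k); rwa [← zmerge] at this
    -- σEF (2^j * t) = 2^j * σEF t
    have hjt : σEF ((2 : ℝ) ^ j * ((2 : ℝ) ^ k * s))
        = (2 : ℝ) ^ j * σEF ((2 : ℝ) ^ k * s) := by
      have hd := hGjt.dEF j
      rw [zcan] at hd
      exact hd hk
    have hvfix : σEF ((2 : ℝ) ^ j * σEF ((2 : ℝ) ^ k * s))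
        = (2 : ℝ) ^ j * ((2 : ℝ) ^ k * s) := by
      rw [← hjt, hGjt.pair]
    have hwe : σEG ((2 : ℝ) ^ j * σEF ((2 : ℝ) ^ k * s))
        = σEF ((2 : ℝ) ^ j * σEF ((2 : ℝ) ^ k * s)) :=
      trans_eq hGv.uF hwF (hGv.tEF hj).1 hw.2 (hGv.tEF hj).2
    -- assemble
    have hσs2 : σEG s = (2 : ℝ) ^ (-k) * σEF ((2 : ℝ) ^ k * s) := by
      rw [hσs, h2.2]
    have hGku : GoodPt E F G σEF σEG σFG ((2 : ℝ) ^ (-k) * σEF ((2 : ℝ) ^ k * s)) :=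
      hB k (-k)
    have hd2 := hGku.dEG (-(k + j))
    rw [neg_neg] at hd2
    have harg : (2 : ℝ) ^ (k + j) * ((2 : ℝ) ^ (-k) * σEF ((2 : ℝ) ^ k * s))
        = (2 : ℝ) ^ j * σEF ((2 : ℝ) ^ k * s) := by
      rw [zmerge, show k + j + -k = j by ring]
    rw [harg] at hd2
    have hfin := hd2 hj
    rw [hσs2, hfin, hwe, hvfix, zmerge, zmerge,
      show -(k + j) + j + k = (0 : ℤ) by ring, zpow_zero, one_mul]

private lemma claim4pt (hGsub : G ⊆ E ∪ F) {s : ℝ}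
    (hA : ∀ m : ℤ, GoodPt E F G σEF σEG σFG ((2 : ℝ) ^ m * s))
    (hB : ∀ k m : ℤ, GoodPt E F G σEF σEG σFG ((2 : ℝ) ^ m * σEF ((2 : ℝ) ^ k * s)))
    (hC : ∀ k j m : ℤ, GoodPt E F G σEF σEG σFG
      ((2 : ℝ) ^ m * σEF ((2 : ℝ) ^ j * σEF ((2 : ℝ) ^ k * s)))) :
    σFG (σFG s) = s := by
  have hs : GoodPt E F G σEF σEG σFG s := by have := hA 0; simpa using this
  obtain ⟨k, hk⟩ := hs.kF.exists
  have hGt : GoodPt E F G σEF σEG σFG ((2 : ℝ) ^ k * s) := hA k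
  have hσs : σFG s = (2 : ℝ) ^ (-k) * σFG ((2 : ℝ) ^ k * s) := by
    have := hs.dFG (-k); rw [neg_neg] at this; exact this hk
  by_cases htG : (2 : ℝ) ^ k * s ∈ G
  · have hid : σFG ((2 : ℝ) ^ k * s) = (2 : ℝ) ^ k * s := claim1F hGt hk htG
    have hfix : σFG s = s := by rw [hσs, hid, zcan]
    rw [hfix, hfix]
  · have h2 := claim2F hGsub hGt (fun m => hB k m) hk htG
    -- u := σFG t = σEF t ∈ E ∩ G, u ∉ F
    have huG : σEF ((2 : ℝ) ^ k * s) ∈ G := by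
      have := (hGt.tFG hk).1; rwa [h2.2] at this
    have huE : σEF ((2 : ℝ) ^ k * s) ∈ E := by
      have := h2.1; rwa [h2.2] at this
    have hut : ∃ n : ℤ, σEF ((2 : ℝ) ^ k * s) - (2 : ℝ) ^ k * s = 2 * Real.pi * n := by
      have := (hGt.tFG hk).2; rwa [h2.2] at this
    have huF : σEF ((2 : ℝ) ^ k * s) ∉ F := by
      intro hmem
      apply htG
      have heq : σEF ((2 : ℝ) ^ k * s) = (2 : ℝ) ^ k * s :=
        trans_eq hGt.uF hmem hk hut (self_cong _)
      rw [← heq]; exact huG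
    have hGu : GoodPt E F G σEF σEG σFG (σEF ((2 : ℝ) ^ k * s)) := by
      have := hB k 0; simpa using this
    obtain ⟨j, hj⟩ := hGu.kF.exists
    have hj0 : j ≠ 0 := by
      intro h0; rw [h0] at hj; simp only [zpow_zero, one_mul] at hj; exact huF hj
    have hGv : GoodPt E F G σEF σEG σFG ((2 : ℝ) ^ j * σEF ((2 : ℝ) ^ k * s)) := hB k j
    have hw := hGv.tFG hj
    have hst := star hGv (fun m => hC k j m) hj
    -- σFG v ∈ E
    have hwE : σFG ((2 : ℝ) ^ j * σEF ((2 : ℝ) ^ k * s)) ∈ E := by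
      rcases hGsub hw.1 with hin | hin
      · exact hin
      · exfalso
        have hwv : σFG ((2 : ℝ) ^ j * σEF ((2 : ℝ) ^ k * s))
            = (2 : ℝ) ^ j * σEF ((2 : ℝ) ^ k * s) :=
          trans_eq hGv.uF hin hj hw.2 (self_cong _)
        have hvG : (2 : ℝ) ^ j * σEF ((2 : ℝ) ^ k * s) ∈ G := by rw [← hwv]; exact hw.1
        have huG' : (2 : ℝ) ^ (-j) * ((2 : ℝ) ^ j * σEF ((2 : ℝ) ^ k * s)) ∈ G := by
          rw [zcan]; exact huG
        have h0j : (0 : ℤ) = -j :=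
          dil_eq hGv.kG (by simpa using hvG) huG'
        omega
    -- σEF v = 2^j * t
    have hjv : σEF ((2 : ℝ) ^ j * σEF ((2 : ℝ) ^ k * s))
        = (2 : ℝ) ^ j * ((2 : ℝ) ^ k * s) := by
      have hd := hGv.dEF j
      rw [zcan] at hd
      rw [hd huE, hGt.pair]
    have hwe : σFG ((2 : ℝ) ^ j * σEF ((2 : ℝ) ^ k * s))
        = σEF ((2 : ℝ) ^ j * σEF ((2 : ℝ) ^ k * s)) :=
      trans_eq hGv.uE hwE hst.1 hw.2 hst.2
    -- assemble
    have hσs2 : σFG s = (2 : ℝ) ^ (-k) * σEF ((2 : ℝ) ^ k * s) := by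
      rw [hσs, h2.2]
    have hGku : GoodPt E F G σEF σEG σFG ((2 : ℝ) ^ (-k) * σEF ((2 : ℝ) ^ k * s)) :=
      hB k (-k)
    have hd2 := hGku.dFG (-(k + j))
    rw [neg_neg] at hd2
    have harg : (2 : ℝ) ^ (k + j) * ((2 : ℝ) ^ (-k) * σEF ((2 : ℝ) ^ k * s))
        = (2 : ℝ) ^ j * σEF ((2 : ℝ) ^ k * s) := by
      rw [zmerge, show k + j + -k = j by ring]
    rw [harg] at hd2
    have hfin := hd2 hj
    rw [hσs2, hfin, hwe, hjv, zmerge, zmerge,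
      show -(k + j) + j + k = (0 : ℤ) by ring, zpow_zero, one_mul]

end Pointwise

/-! ### Almost-everywhere machinery -/

private lemma ae_dil {p : ℝ → Prop} (h : ∀ᵐ x : ℝ ∂volume, p x) (k : ℤ) :
    ∀ᵐ x : ℝ ∂volume, p ((2 : ℝ) ^ k * x) := by
  have hne : ((2 : ℝ) ^ k) ≠ 0 := zpow_ne_zero _ two_ne_zero
  rw [ae_iff] at h ⊢
  have : {x : ℝ | ¬p ((2 : ℝ) ^ k * x)} = ((2 : ℝ) ^ k * ·) ⁻¹' {x : ℝ | ¬p x} := rfl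
  rw [this, Real.volume_preimage_mul_left hne, h, mul_zero]

private lemma ae_all_dil {p : ℝ → Prop} (h : ∀ᵐ x : ℝ ∂volume, p x) :
    ∀ᵐ x : ℝ ∂volume, ∀ k : ℤ, p ((2 : ℝ) ^ k * x) :=
  ae_all_iff.mpr fun k => ae_dil h k

/-- An interpolation map pulls back null sets to null sets. -/
private lemma interp_preimage_null {E F : Set ℝ} {σ : ℝ → ℝ}
    (hE : IsDyadicWaveletSet E) (hσ : IsInterpolationMap E F σ)
    {N : Set ℝ} (hN : volume N = 0) : volume (σ ⁻¹' N) = 0 := by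
  have hΩ : ∀ᵐ x : ℝ ∂volume,
      (∀ n : ℤ, (2 : ℝ) ^ (-n) * x ∈ E → σ x = (2 : ℝ) ^ n * σ ((2 : ℝ) ^ (-n) * x)) ∧
      (∃ k : ℤ, (2 : ℝ) ^ k * x ∈ E) ∧
      (∀ k : ℤ, (2 : ℝ) ^ k * x ∈ E →
        ∃ m : ℤ, σ ((2 : ℝ) ^ k * x) - (2 : ℝ) ^ k * x = 2 * Real.pi * m) := by
    have h1 : ∀ᵐ x : ℝ ∂volume,
        ∀ n : ℤ, (2 : ℝ) ^ (-n) * x ∈ E → σ x = (2 : ℝ) ^ n * σ ((2 : ℝ) ^ (-n) * x) :=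
      ae_all_iff.mpr hσ.2.2.2
    have h2 : ∀ᵐ x : ℝ ∂volume, ∃ k : ℤ, (2 : ℝ) ^ k * x ∈ E :=
      hE.2.2.mono fun x hx => hx.exists
    have h3' : ∀ᵐ x : ℝ ∂volume, x ∈ E → ∃ m : ℤ, σ x - x = 2 * Real.pi * m :=
      hσ.2.2.1.mono fun x hx hxE => (hx hxE).2
    have h3 := ae_all_dil h3'
    filter_upwards [h1, h2, h3] with x hx1 hx2 hx3
    exact ⟨hx1, hx2, hx3⟩
  rw [ae_iff] at hΩ
  have hsub : σ ⁻¹' N ⊆ {x : ℝ | ¬((∀ n : ℤ, (2 : ℝ) ^ (-n) * x ∈ E →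
        σ x = (2 : ℝ) ^ n * σ ((2 : ℝ) ^ (-n) * x)) ∧
      (∃ k : ℤ, (2 : ℝ) ^ k * x ∈ E) ∧
      (∀ k : ℤ, (2 : ℝ) ^ k * x ∈ E →
        ∃ m : ℤ, σ ((2 : ℝ) ^ k * x) - (2 : ℝ) ^ k * x = 2 * Real.pi * m))} ∪
      ⋃ km : ℤ × ℤ, (fun x : ℝ => x + 2 * Real.pi * km.2 * (2 : ℝ) ^ (-km.1)) ⁻¹' N := by
    intro x hx
    by_cases hgood : (∀ n : ℤ, (2 : ℝ) ^ (-n) * x ∈ E →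
        σ x = (2 : ℝ) ^ n * σ ((2 : ℝ) ^ (-n) * x)) ∧
      (∃ k : ℤ, (2 : ℝ) ^ k * x ∈ E) ∧
      (∀ k : ℤ, (2 : ℝ) ^ k * x ∈ E →
        ∃ m : ℤ, σ ((2 : ℝ) ^ k * x) - (2 : ℝ) ^ k * x = 2 * Real.pi * m)
    · right
      obtain ⟨hd, ⟨k, hk⟩, ht⟩ := hgood
      obtain ⟨m, hm⟩ := ht k hk
      have hdk := hd (-k)
      rw [neg_neg] at hdk
      have hσx : σ x = (2 : ℝ) ^ (-k) * σ ((2 : ℝ) ^ k * x) := hdk hk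
      have hσx' : σ x = x + 2 * Real.pi * m * (2 : ℝ) ^ (-k) := by
        have hσt : σ ((2 : ℝ) ^ k * x) = (2 : ℝ) ^ k * x + 2 * Real.pi * m := by linarith
        rw [hσx, hσt, mul_add, zcan]
        ring
      refine mem_iUnion.mpr ⟨(k, m), ?_⟩
      exact Set.mem_preimage.mpr (hσx' ▸ hx)
    · left; exact hgood
  refine measure_mono_null hsub ?_
  refine measure_union_null hΩ (measure_iUnion_null fun km => ?_)
  have : (fun x : ℝ => x + 2 * Real.pi * km.2 * (2 : ℝ) ^ (-km.1)) ⁻¹' N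
      = (fun x : ℝ => x + 2 * Real.pi * km.2 * (2 : ℝ) ^ (-km.1)) ⁻¹' N := rfl
  rw [measure_preimage_add_right volume _ N]
  exact hN

private lemma ae_comp_interp {E F : Set ℝ} {σ : ℝ → ℝ}
    (hE : IsDyadicWaveletSet E) (hσ : IsInterpolationMap E F σ)
    {p : ℝ → Prop} (h : ∀ᵐ x : ℝ ∂volume, p x) : ∀ᵐ x : ℝ ∂volume, p (σ x) := by
  rw [ae_iff] at h ⊢
  exact interp_preimage_null hE hσ h

/-- Let `(E, F)` be an interpolation pair of dyadic wavelet sets and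
`G ⊆ E ∪ F` a dyadic wavelet set.  Then `σ_E^G = id` a.e. on `E ∩ G`,
`σ_E^G = σ_E^F` a.e. on `E \ G`, and both `(E, G)` and `(F, G)` are interpolation
pairs. -/
theorem stmt_3 (E F G : Set ℝ) (hE : IsDyadicWaveletSet E) (hF : IsDyadicWaveletSet F)
    (hG : IsDyadicWaveletSet G) (hGsub : G ⊆ E ∪ F)
    (σEF σEG σFG : ℝ → ℝ)
    (hσEF : IsInterpolationMap E F σEF)
    (hpair : ∀ᵐ s : ℝ ∂volume, σEF (σEF s) = s)
    (hσEG : IsInterpolationMap E G σEG)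
    (hσFG : IsInterpolationMap F G σFG) :
    (∀ᵐ s : ℝ ∂volume, s ∈ E ∩ G → σEG s = s) ∧
    (∀ᵐ s : ℝ ∂volume, s ∈ E \ G → σEG s = σEF s) ∧
    (∀ᵐ s : ℝ ∂volume, σEG (σEG s) = s) ∧
    (∀ᵐ s : ℝ ∂volume, σFG (σFG s) = s) := by
  -- the conull set of good points
  have hP : ∀ᵐ x : ℝ ∂volume, GoodPt E F G σEF σEG σFG x := by
    filter_upwards [hσEF.2.2.1, hσEG.2.2.1, hσFG.2.2.1,
      ae_all_iff.mpr hσEF.2.2.2, ae_all_iff.mpr hσEG.2.2.2, ae_all_iff.mpr hσFG.2.2.2,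
      hpair, hE.2.1, hF.2.1, hG.2.1, hE.2.2, hF.2.2, hG.2.2] with x
      h1 h2 h3 h4 h5 h6 h7 h8 h9 h10 h11 h12 h13
    exact ⟨h1, h2, h3, h4, h5, h6, h7, h8, h9, h10, h11, h12, h13⟩
  have hA : ∀ᵐ s : ℝ ∂volume, ∀ m : ℤ, GoodPt E F G σEF σEG σFG ((2 : ℝ) ^ m * s) :=
    ae_all_dil hP
  have hB : ∀ᵐ s : ℝ ∂volume, ∀ k m : ℤ,
      GoodPt E F G σEF σEG σFG ((2 : ℝ) ^ m * σEF ((2 : ℝ) ^ k * s)) :=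
    ae_all_dil (ae_comp_interp hE hσEF hA)
  have hC : ∀ᵐ s : ℝ ∂volume, ∀ k j m : ℤ,
      GoodPt E F G σEF σEG σFG ((2 : ℝ) ^ m * σEF ((2 : ℝ) ^ j * σEF ((2 : ℝ) ^ k * s))) :=
    ae_all_dil (ae_comp_interp hE hσEF hB)
  refine ⟨?_, ?_, ?_, ?_⟩
  · filter_upwards [hP] with s hs hmem
    exact claim1E hs hmem.1 hmem.2
  · filter_upwards [hP] with s hs hmem
    exact (claim2E hGsub hs hmem.1 hmem.2).2
  · filter_upwards [hA, hB] with s hA' hB'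
    exact claim3pt hGsub hA' hB'
  · filter_upwards [hA, hB, hC] with s hA' hB' hC'
    exact claim4pt hGsub hA' hB' hC'
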